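/- A residue a modulo m is regular if and only if the equivalence (a^k ≡ a^l (mod m) ⟺ k ≡ l (mod |a|_m)) holds for all positive integers k, l. -/
import Mathlib


/-- `e` is an idempotent residue modulo `m`: `e^2 ≡ e (mod m)`. -/
def Idem (m : ℕ) (e : ZMod m) : Prop := e ^ 2 = e

/-- The order `|a|_m`: the least `n ≥ 1` such that `a^n` is idempotent mod `m`. -/
noncomputable def ord (m : ℕ) (a : ZMod m) : ℕ := sInf {n | 1 ≤ n ∧ Idem m (a ^ n)}

/-- `a` is regular modulo `m`: `a^(|a|_m + 1) ≡ a (mod m)`. -/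
noncomputable def Reg (m : ℕ) (a : ZMod m) : Prop := a ^ (ord m a + 1) = a

/-- `R_m^e`: the regular residues mod `m` whose idempotent power is `e`. -/
noncomputable def Rme (m : ℕ) (e : ZMod m) : Set (ZMod m) :=
  {a | Reg m a ∧ a ^ (ord m a) = e}

/-- The orbit of `a` modulo `m`: `{a^j mod m : 1 ≤ j ≤ |a|_m}`. -/
noncomputable def orb (m : ℕ) (a : ZMod m) : Finset (ZMod m) :=
  (Finset.Icc 1 (ord m a)).image (a ^ ·)

lemma tail_step {M : Type*} [Monoid M] (a : M) {i c : ℕ} (h : a ^ i = a ^ (i + c))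
    {n : ℕ} (hn : i ≤ n) : a ^ n = a ^ (n + c) := by
  obtain ⟨s, rfl⟩ := Nat.exists_eq_add_of_le hn
  calc a ^ (i + s) = a ^ i * a ^ s := pow_add a i s
    _ = a ^ (i + c) * a ^ s := by rw [h]
    _ = a ^ (i + s + c) := by rw [← pow_add]; ring_nf

lemma tail_period {M : Type*} [Monoid M] (a : M) {i c : ℕ} (h : a ^ i = a ^ (i + c))
    {n : ℕ} (hn : i ≤ n) (t : ℕ) : a ^ n = a ^ (n + t * c) := by
  induction t with
  | zero => simp
  | succ t ih =>
    have h2 : a ^ (n + t * c) = a ^ (n + t * c + c) :=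
      tail_step a h (le_trans hn (Nat.le_add_right _ _))
    rw [ih, h2]; ring_nf

lemma bezout_nat (c d : ℕ) (hc : 1 ≤ c) (hd : 1 ≤ d) :
    ∃ x y : ℕ, c * x = Nat.gcd c d + d * y := by
  have hb := Nat.gcd_eq_gcd_ab c d
  set u := Nat.gcdA c d with hu
  set v := Nat.gcdB c d with hv
  set K : ℤ := |u| + |v| + 1 with hK
  have h1 : (1:ℤ) ≤ d := by exact_mod_cast hd
  have h2 : (1:ℤ) ≤ c := by exact_mod_cast hc
  have hxnn : (0:ℤ) ≤ u + K * d := by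
    nlinarith [abs_nonneg u, abs_nonneg v, neg_abs_le u]
  have hynn : (0:ℤ) ≤ c * K - v := by
    nlinarith [abs_nonneg u, abs_nonneg v, neg_abs_le v, le_abs_self v]
  refine ⟨(u + K * d).toNat, (c * K - v).toNat, ?_⟩
  zify
  rw [Int.toNat_of_nonneg hxnn, Int.toNat_of_nonneg hynn]
  linarith [hb]

/-- In a finite monoid there is a positive idempotent power. -/
lemma exists_idem_pow {m : ℕ} (hm : 1 ≤ m) (a : ZMod m) :
    ∃ n, 1 ≤ n ∧ Idem m (a ^ n) := by
  haveI : NeZero m := ⟨by omega⟩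
  obtain ⟨i, j, hne, hij⟩ :=
    Finite.exists_ne_map_eq_of_infinite (fun n : ℕ => a ^ (n + 1))
  rcases Nat.lt_or_ge i j with h | h
  · -- c = j - i > 0, a^(i+1) = a^(i+1+c)
    obtain ⟨c, rfl⟩ := Nat.exists_eq_add_of_lt h
    have hstep : a ^ (i + 1) = a ^ ((i + 1) + (c + 1)) := by
      rw [hij]; ring_nf
    refine ⟨(i + 1) * (c + 1), Nat.mul_pos (by omega) (by omega), ?_⟩
    have h1 : a ^ ((i+1)*(c+1)) = a ^ ((i+1)*(c+1) + (i+1)*(c+1)) :=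
      tail_period a hstep (n := (i+1)*(c+1)) (Nat.le_mul_of_pos_right _ (by omega)) (i+1)
    unfold Idem
    rw [← pow_mul, show (i+1)*(c+1)*2 = (i+1)*(c+1) + (i+1)*(c+1) by ring]
    exact h1.symm
  · have h' : j < i := lt_of_le_of_ne h (fun e => hne (by rw [e]))
    obtain ⟨c, rfl⟩ := Nat.exists_eq_add_of_lt h'
    have hstep : a ^ (j + 1) = a ^ ((j + 1) + (c + 1)) := by
      rw [← hij]; ring_nf
    refine ⟨(j + 1) * (c + 1), Nat.mul_pos (by omega) (by omega), ?_⟩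
    have h1 : a ^ ((j+1)*(c+1)) = a ^ ((j+1)*(c+1) + (j+1)*(c+1)) :=
      tail_period a hstep (n := (j+1)*(c+1)) (Nat.le_mul_of_pos_right _ (by omega)) (j+1)
    unfold Idem
    rw [← pow_mul, show (j+1)*(c+1)*2 = (j+1)*(c+1) + (j+1)*(c+1) by ring]
    exact h1.symm

/-- `a` is regular mod `m` iff `a^k ≡ a^l (mod m) ⟺ k ≡ l (mod |a|_m)` holds for
all positive integers `k, l`. -/
theorem regular_iff_pow_eq_pow_iff (m : ℕ) (hm : 1 ≤ m) (a : ZMod m) :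
    Reg m a ↔ ∀ k l : ℕ, 1 ≤ k → 1 ≤ l →
      (a ^ k = a ^ l ↔ k ≡ l [MOD ord m a]) := by
  set d := ord m a with hd
  have hne : {n | 1 ≤ n ∧ Idem m (a ^ n)}.Nonempty := exists_idem_pow hm a
  have hmem : 1 ≤ d ∧ Idem m (a ^ d) := by rw [hd]; exact Nat.sInf_mem hne
  obtain ⟨hd1, hdI⟩ := hmem
  have hmin : ∀ n, 1 ≤ n → Idem m (a ^ n) → d ≤ n := fun n h1 h2 => by
    rw [hd]; exact Nat.sInf_le ⟨h1, h2⟩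
  constructor
  · intro hreg k l hk hl
    -- full period: a^n = a^(n + t*d) for n ≥ 1
    have hstep1 : a ^ 1 = a ^ (1 + d) := by
      rw [Nat.add_comm]; simpa [Reg] using hreg.symm
    have hfull : ∀ n t, 1 ≤ n → a ^ n = a ^ (n + t * d) := fun n t h =>
      tail_period a hstep1 h t
    -- congruence implies equality
    have himp : ∀ k l : ℕ, 1 ≤ k → 1 ≤ l → k ≡ l [MOD d] → a ^ k = a ^ l := by
      intro k l hk hl hcong
      rcases le_or_gt k l with h | h
      · obtain ⟨t, ht⟩ := (Nat.modEq_iff_dvd' h).1 hcong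
        rw [Nat.mul_comm] at ht
        have : l = k + t * d := by omega
        rw [this, ← hfull k t hk]
      · obtain ⟨t, ht⟩ := (Nat.modEq_iff_dvd' h.le).1 hcong.symm
        rw [Nat.mul_comm] at ht
        have : k = l + t * d := by omega
        rw [this, ← hfull l t hl]
    -- injectivity on [1, d]
    have hinj : ∀ i j : ℕ, 1 ≤ i → j ≤ d → i < j → a ^ i ≠ a ^ j := by
      intro i j hi hjd hij heq
      set c := j - i with hc
      have hc1 : 1 ≤ c := by omega
      have hstepc : a ^ i = a ^ (i + c) := by
        rw [heq]; congr 1; omega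
      set g := Nat.gcd c d with hg
      have hg1 : 1 ≤ g := Nat.gcd_pos_of_pos_right c (by omega)
      have hgd : g < d := by
        have : g ≤ c := Nat.le_of_dvd (by omega) (Nat.gcd_dvd_left c d)
        omega
      obtain ⟨x, y, hxy⟩ := bezout_nat c d hc1 hd1
      -- a^g = a^(g + i*d) = a^(g + i*d + x*c) = a^(2g + (i+y)*d) = a^(2g)
      have e1 : a ^ g = a ^ (g + i * d) := hfull g i hg1
      have e2 : a ^ (g + i * d) = a ^ (g + i * d + x * c) := by
        have hle : i ≤ g + i * d := by nlinarith
        exact tail_period a hstepc hle x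
      have e3 : a ^ (g + i * d + x * c) = a ^ (g + g + (i + y) * d) := by
        congr 1
        have : x * c = g + d * y := by rw [Nat.mul_comm]; exact hxy
        rw [this]; ring
      have e4 : a ^ (g + g + (i + y) * d) = a ^ (g + g) :=
        (hfull (g + g) (i + y) (by omega)).symm
      have hIg : Idem m (a ^ g) := by
        unfold Idem
        rw [← pow_mul, show g * 2 = g + g by ring, ← e4, ← e3, ← e2, ← e1]
      exact absurd (hmin g hg1 hIg) (by omega)
    constructor
    · intro heq
      -- normalize k and l into [1, d]
      set k' := (k - 1) % d + 1 with hk'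
      set l' := (l - 1) % d + 1 with hl'
      have hkk' : k ≡ k' [MOD d] := by
        have h1 := Nat.div_add_mod' (k - 1) d
        have : k = k' + ((k - 1) / d) * d := by omega
        rw [this]
        simp [Nat.ModEq, Nat.add_mul_mod_self_right]
      have hll' : l ≡ l' [MOD d] := by
        have h1 := Nat.div_add_mod' (l - 1) d
        have : l = l' + ((l - 1) / d) * d := by omega
        rw [this]
        simp [Nat.ModEq, Nat.add_mul_mod_self_right]
      have hk'1 : 1 ≤ k' := by omega
      have hl'1 : 1 ≤ l' := by omega
      have hk'd : k' ≤ d := by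
        have := Nat.mod_lt (k - 1) (show 0 < d by omega); omega
      have hl'd : l' ≤ d := by
        have := Nat.mod_lt (l - 1) (show 0 < d by omega); omega
      have heq' : a ^ k' = a ^ l' := by
        rw [← himp k k' hk hk'1 hkk', ← himp l l' hl hl'1 hll', heq]
      have : k' = l' := by
        rcases lt_trichotomy k' l' with h | h | h
        · exact absurd heq' (hinj k' l' hk'1 hl'd h)
        · exact h
        · exact absurd heq'.symm (hinj l' k' hl'1 hk'd h)
      exact hkk'.trans (this ▸ hll'.symm)
    · exact himp k l hk hl
  · intro h
    have := (h (d + 1) 1 (by omega) le_rfl).2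
    unfold Reg
    rw [← hd, this (by simp [Nat.ModEq, Nat.add_mod_left]), pow_one]
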